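/- Identify ℝ² with ℂ, let H² = {z ∈ ℂ : Im z > 0} and B² = {z ∈ ℂ : |z| < 1}. For a ∈ H² and α ∈ ℝ let f(z) = e^{iα}·(z−a)/(z−\bar{a}), which is a Möbius transformation mapping H² onto B². Then for all x,y ∈ H²: v_{H²}(x,y)/2 ≤ v_{B²}(f(x),f(y)) ≤ 2·v_{H²}(x,y). Both constants are best possible: with f₀(z) = (z−i)/(z+i), for every ε > 0 there exist x,y ∈ H² with v_{B²}(f₀(x),f₀(y)) > (2−ε)·v_{H²}(x,y), and there exist distinct x,y ∈ H² with v_{B²}(f₀(x),f₀(y)) = v_{H²}(x,y)/2. -/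

import Mathlib

open EuclideanGeometry Real Set

/-- The visual angle metric on a planar domain `G ⊊ ℂ`:
`v_G(x,y) = sup_{z ∈ ∂G} ∠(x,z,y)`. -/
noncomputable def visualAngleC (G : Set ℂ) (x y : ℂ) : ℝ :=
  sSup ((fun z => EuclideanGeometry.angle x z y) '' frontier G)

/-- The upper half plane `H² = {z ∈ ℂ : Im z > 0}`. -/
def upperHalfC : Set ℂ := {z | 0 < z.im}

/-- The Möbius transformation `z ↦ e^{iα}(z−a)/(z−\bar a)` mapping `H²` onto the unit disc. -/
noncomputable def halfToDisc (a : ℂ) (α : ℝ) (z : ℂ) : ℂ :=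
  Complex.exp (α * Complex.I) * (z - a) / (z - (starRingEnd ℂ) a)

/-- The Cayley transform `f₀(z) = (z−i)/(z+i)`. -/
noncomputable def cayley (z : ℂ) : ℂ := (z - Complex.I) / (z + Complex.I)

namespace VAM
open Complex ComplexConjugate

attribute [local instance] Complex.finrank_real_complex_fact

lemma frontier_upper : frontier upperHalfC = {z : ℂ | z.im = 0} := by
  have h : upperHalfC = Complex.im ⁻¹' (Ioi 0) := rfl
  rw [h, ← Complex.isOpenMap_im.preimage_frontier_eq_frontier_preimage Complex.continuous_im,
    frontier_Ioi]
  rfl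

lemma frontier_disc : frontier (Metric.ball (0:ℂ) 1) = Metric.sphere 0 1 :=
  frontier_ball 0 one_ne_zero

lemma bdd (x y : ℂ) (s : Set ℂ) : BddAbove ((fun z => EuclideanGeometry.angle x z y) '' s) :=
  ⟨π, by rintro _ ⟨z, _, rfl⟩; exact EuclideanGeometry.angle_le_pi _ _ _⟩

lemma le_visual {G : Set ℂ} {x y z : ℂ} (hz : z ∈ frontier G) :
    EuclideanGeometry.angle x z y ≤ visualAngleC G x y :=
  le_csSup (bdd x y _) ⟨z, hz, rfl⟩

lemma visual_le {G : Set ℂ} {x y : ℂ} {c : ℝ} (hne : (frontier G).Nonempty)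
    (h : ∀ z ∈ frontier G, EuclideanGeometry.angle x z y ≤ c) : visualAngleC G x y ≤ c :=
  csSup_le (hne.image _) (by rintro _ ⟨z, hz, rfl⟩; exact h z hz)

lemma abs_toReal_coe_le (s : ℝ) : |((s : Real.Angle)).toReal| ≤ |s| := by
  obtain ⟨k, hk⟩ := Real.Angle.angle_eq_iff_two_pi_dvd_sub.mp (Real.Angle.coe_toReal (s : Real.Angle))
  have h1 : |((s : Real.Angle)).toReal| ≤ π := Real.Angle.abs_toReal_le_pi _
  rcases eq_or_ne k 0 with h | h
  · simp only [h, Int.cast_zero, mul_zero, sub_eq_zero] at hk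
    rw [hk]
  · have hk1 : (1:ℝ) ≤ |(k:ℝ)| := by
      rw [← Int.cast_abs]
      exact_mod_cast Int.one_le_abs h
    have hπ : (0:ℝ) < π := Real.pi_pos
    have h2 : |2*π*(k:ℝ)| = 2*π*|(k:ℝ)| := by
      rw [_root_.abs_mul, _root_.abs_of_pos (by linarith : (0:ℝ) < 2*π)]
    have h3 : |2*π*(k:ℝ)| - |((s : Real.Angle)).toReal| ≤ |2*π*(k:ℝ) - ((s : Real.Angle)).toReal| :=
      abs_sub_abs_le_abs_sub _ _
    have h4 : 2*π*(k:ℝ) - ((s : Real.Angle)).toReal = -s := by linarith [hk]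
    rw [h4, abs_neg] at h3
    nlinarith

lemma abs_toReal_add_le (t p : Real.Angle) :
    |(t + p).toReal| ≤ |t.toReal| + |p.toReal| := by
  have h : t + p = ((t.toReal + p.toReal : ℝ) : Real.Angle) := by
    rw [Real.Angle.coe_add, Real.Angle.coe_toReal, Real.Angle.coe_toReal]
  rw [h]
  exact (abs_toReal_coe_le _).trans (abs_add_le _ _)

lemma abs_toReal_neg (t : Real.Angle) : |(-t).toReal| = |t.toReal| := by
  rcases eq_or_ne t.toReal π with hp | hp
  · have ht : t = (π : Real.Angle) := by rw [← Real.Angle.coe_toReal t, hp]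
    rw [ht, Real.Angle.neg_coe_pi]
  · have h1 := Real.Angle.toReal_le_pi t
    have h2 := Real.Angle.neg_pi_lt_toReal t
    have h : -t = ((-(t.toReal) : ℝ) : Real.Angle) := by
      rw [Real.Angle.coe_neg, Real.Angle.coe_toReal]
    rw [h, Real.Angle.toReal_coe_eq_self_iff.mpr ⟨by linarith [lt_of_le_of_ne h1 hp], by linarith⟩,
      abs_neg]

lemma oangle_arg (u v : ℂ) (hu : u ≠ 0) (hv : v ≠ 0) :
    Complex.orientation.oangle u v
      = ((Complex.arg v : Real.Angle) - (Complex.arg u : Real.Angle)) := by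
  rw [Complex.oangle, Complex.arg_mul_coe_angle (by simpa using hu) hv,
    Complex.arg_conj_coe_angle]
  abel

lemma oangle_mul_div (μ A B C D : ℂ) (hμ : μ ≠ 0) (hA : A ≠ 0) (hB : B ≠ 0) (hC : C ≠ 0)
    (hD : D ≠ 0) :
    Complex.orientation.oangle (μ * A / C) (μ * B / D) =
      Complex.orientation.oangle A B - Complex.orientation.oangle C D := by
  rw [oangle_arg _ _ (div_ne_zero (mul_ne_zero hμ hA) hC) (div_ne_zero (mul_ne_zero hμ hB) hD), oangle_arg _ _ hA hB, oangle_arg _ _ hC hD,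
    Complex.arg_div_coe_angle (mul_ne_zero hμ hA) hC, Complex.arg_div_coe_angle (mul_ne_zero hμ hB) hD,
    Complex.arg_mul_coe_angle hμ hA, Complex.arg_mul_coe_angle hμ hB]
  abel

lemma euclid_angle_eq (p1 p2 p3 : ℂ) :
    EuclideanGeometry.angle p1 p2 p3 = InnerProductGeometry.angle (p1 - p2) (p3 - p2) := rfl

lemma angle_abs_oangle (p1 p2 p3 : ℂ) (h1 : p1 ≠ p2) (h3 : p3 ≠ p2) :
    EuclideanGeometry.angle p1 p2 p3
      = |(Complex.orientation.oangle (p1 - p2) (p3 - p2)).toReal| := by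
  rw [euclid_angle_eq]
  exact Complex.orientation.angle_eq_abs_oangle_toReal (sub_ne_zero.mpr h1) (sub_ne_zero.mpr h3)

lemma htd_sub (a : ℂ) (α : ℝ) (u v : ℂ) (hu : u ≠ conj a) (hv : v ≠ conj a) :
    halfToDisc a α u - halfToDisc a α v
      = Complex.exp (α * I) * ((u - v) * (a - conj a)) / ((u - conj a) * (v - conj a)) := by
  have h1 : u - conj a ≠ 0 := sub_ne_zero.mpr hu
  have h2 : v - conj a ≠ 0 := sub_ne_zero.mpr hv
  unfold halfToDisc
  field_simp
  ring

lemma ne_conj_of_im {a u : ℂ} (ha : 0 < a.im) (hu : 0 ≤ u.im) : u ≠ conj a := by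
  intro h
  rw [h] at hu
  simp only [Complex.conj_im] at hu
  linarith

lemma sub_conj_ne {a u : ℂ} (ha : 0 < a.im) (hu : 0 ≤ u.im) : u - conj a ≠ 0 :=
  sub_ne_zero.mpr (ne_conj_of_im ha hu)

lemma a_sub_conj_ne {a : ℂ} (ha : 0 < a.im) : a - conj a ≠ 0 := by
  intro h
  have := congrArg Complex.im h
  simp only [Complex.sub_im, Complex.conj_im, Complex.zero_im] at this
  linarith

lemma key_angle (a : ℂ) (ha : 0 < a.im) (α : ℝ) (x y z : ℂ) (hx : 0 < x.im) (hy : 0 < y.im)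
    (hz : z.im = 0) :
    EuclideanGeometry.angle (halfToDisc a α x) (halfToDisc a α z) (halfToDisc a α y)
      = |(Complex.orientation.oangle (x - z) (y - z)
          - Complex.orientation.oangle (x - conj a) (y - conj a)).toReal| := by
  have hE : Complex.exp (α * I) ≠ 0 := Complex.exp_ne_zero _
  have hxb : x - conj a ≠ 0 := sub_conj_ne ha hx.le
  have hyb : y - conj a ≠ 0 := sub_conj_ne ha hy.le
  have hzb : z - conj a ≠ 0 := sub_conj_ne ha hz.ge
  have hab : a - conj a ≠ 0 := a_sub_conj_ne ha
  have hxz : x - z ≠ 0 := by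
    intro h
    have := congrArg Complex.im h
    simp only [Complex.sub_im, Complex.zero_im, hz] at this
    linarith
  have hyz : y - z ≠ 0 := by
    intro h
    have := congrArg Complex.im h
    simp only [Complex.sub_im, Complex.zero_im, hz] at this
    linarith
  set μ : ℂ := Complex.exp (α * I) * (a - conj a) / (z - conj a) with hμdef
  have hμ : μ ≠ 0 := by
    apply div_ne_zero (mul_ne_zero hE hab) hzb
  have h1 : halfToDisc a α x - halfToDisc a α z = μ * (x - z) / (x - conj a) := by
    rw [htd_sub a α x z (ne_conj_of_im ha hx.le) (ne_conj_of_im ha hz.ge), hμdef]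
    field_simp
  have h2 : halfToDisc a α y - halfToDisc a α z = μ * (y - z) / (y - conj a) := by
    rw [htd_sub a α y z (ne_conj_of_im ha hy.le) (ne_conj_of_im ha hz.ge), hμdef]
    field_simp
  have hne1 : halfToDisc a α x ≠ halfToDisc a α z := by
    intro h
    rw [sub_eq_zero.mpr h] at h1
    exact (div_ne_zero (mul_ne_zero hμ hxz) hxb) h1.symm
  have hne2 : halfToDisc a α y ≠ halfToDisc a α z := by
    intro h
    rw [sub_eq_zero.mpr h] at h2
    exact (div_ne_zero (mul_ne_zero hμ hyz) hyb) h2.symm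
  rw [angle_abs_oangle _ _ _ hne1 hne2, h1, h2,
    oangle_mul_div μ _ _ _ _ hμ hxz hyz hxb hyb]

lemma key_angle_E (a : ℂ) (ha : 0 < a.im) (α : ℝ) (x y : ℂ) (hx : 0 < x.im) (hy : 0 < y.im) :
    EuclideanGeometry.angle (halfToDisc a α x) (Complex.exp (α * I)) (halfToDisc a α y)
      = EuclideanGeometry.angle x (conj a) y := by
  have hE : Complex.exp (α * I) ≠ 0 := Complex.exp_ne_zero _
  have hxb : x - conj a ≠ 0 := sub_conj_ne ha hx.le
  have hyb : y - conj a ≠ 0 := sub_conj_ne ha hy.le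
  have hab : a - conj a ≠ 0 := a_sub_conj_ne ha
  set μ : ℂ := Complex.exp (α * I) * (conj a - a) with hμdef
  have hμ : μ ≠ 0 := mul_ne_zero hE (fun h => hab (by rw [← neg_sub] at h; simpa using neg_eq_zero.mp h))
  have h1 : halfToDisc a α x - Complex.exp (α * I) = μ * 1 / (x - conj a) := by
    unfold halfToDisc
    rw [hμdef]
    field_simp
    ring
  have h2 : halfToDisc a α y - Complex.exp (α * I) = μ * 1 / (y - conj a) := by
    unfold halfToDisc
    rw [hμdef]
    field_simp
    ring
  have hne1 : halfToDisc a α x ≠ Complex.exp (α * I) := by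
    intro h
    rw [sub_eq_zero.mpr h] at h1
    exact (div_ne_zero (by simpa using hμ) hxb) h1.symm
  have hne2 : halfToDisc a α y ≠ Complex.exp (α * I) := by
    intro h
    rw [sub_eq_zero.mpr h] at h2
    exact (div_ne_zero (by simpa using hμ) hyb) h2.symm
  have hxb' : x ≠ conj a := ne_conj_of_im ha hx.le
  have hyb' : y ≠ conj a := ne_conj_of_im ha hy.le
  rw [angle_abs_oangle _ _ _ hne1 hne2, h1, h2,
    oangle_mul_div μ 1 1 _ _ hμ one_ne_zero one_ne_zero hxb hyb,
    angle_abs_oangle _ _ _ hxb' hyb']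
  rw [Complex.orientation.oangle_self, zero_sub, abs_toReal_neg]

lemma abs_htd_lt (a : ℂ) (ha : 0 < a.im) (α : ℝ) (x : ℂ) (hx : 0 < x.im) :
    ‖halfToDisc a α x‖ < 1 := by
  have hxb : x - conj a ≠ 0 := sub_conj_ne ha hx.le
  unfold halfToDisc
  rw [norm_div, norm_mul, Complex.norm_exp_ofReal_mul_I, one_mul]
  rw [div_lt_one (norm_pos_iff.mpr hxb)]
  have h : Complex.normSq (x - a) < Complex.normSq (x - conj a) := by
    simp only [Complex.normSq_apply, Complex.sub_re, Complex.sub_im, Complex.conj_re,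
      Complex.conj_im]
    nlinarith
  rw [Complex.norm_def, Complex.norm_def]
  exact Real.sqrt_lt_sqrt (Complex.normSq_nonneg _) h

lemma abs_htd_one (a : ℂ) (ha : 0 < a.im) (α : ℝ) (z : ℂ) (hz : z.im = 0) :
    ‖halfToDisc a α z‖ = 1 := by
  have hzb : z - conj a ≠ 0 := sub_conj_ne ha hz.ge
  unfold halfToDisc
  rw [norm_div, norm_mul, Complex.norm_exp_ofReal_mul_I, one_mul]
  rw [div_eq_one_iff_eq (norm_ne_zero_iff.mpr hzb)]
  have h : Complex.normSq (z - a) = Complex.normSq (z - conj a) := by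
    simp only [Complex.normSq_apply, Complex.sub_re, Complex.sub_im, Complex.conj_re,
      Complex.conj_im, hz]
    ring
  rw [Complex.norm_def, Complex.norm_def, h]

lemma htd_surj (a : ℂ) (ha : 0 < a.im) (α : ℝ) (w : ℂ) (hw : ‖w‖ = 1)
    (hwE : w ≠ Complex.exp (α * I)) : ∃ z : ℂ, z.im = 0 ∧ halfToDisc a α z = w := by
  have hE : Complex.exp (α * I) ≠ 0 := Complex.exp_ne_zero _
  have habsE : ‖Complex.exp (α * I)‖ = 1 := Complex.norm_exp_ofReal_mul_I α
  set v : ℂ := w / Complex.exp (α * I) with hvdef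
  have hv0 : v ≠ 0 := div_ne_zero (fun h => by simp [h] at hw) hE
  have hv1 : ‖v‖ = 1 := by rw [hvdef, norm_div, hw, habsE, div_one]
  have hvne : v ≠ 1 := by
    intro h
    apply hwE
    rw [hvdef] at h
    field_simp at h
    exact h
  have h1v : (1 : ℂ) - v ≠ 0 := fun h => hvne (by linear_combination -h)
  have hnv : Complex.normSq v = 1 := by
    rw [← Complex.sq_norm, hv1]; norm_num
  have hcv : conj v = v⁻¹ := by
    rw [Complex.inv_def, hnv]; simp
  have hab : a - conj a ≠ 0 := a_sub_conj_ne ha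
  set z : ℂ := (a - v * conj a) / (1 - v) with hzdef
  have hzc : conj z = z := by
    rw [hzdef, map_div₀, map_sub, map_sub, map_mul, map_one, Complex.conj_conj, hcv]
    rw [div_eq_div_iff (by simpa using sub_ne_zero.mpr (fun h : (1:ℂ) = v⁻¹ => by
      rw [eq_comm, inv_eq_one] at h; exact hvne h)) h1v]
    field_simp
    ring
  have hz : z.im = 0 := Complex.conj_eq_iff_im.mp hzc
  refine ⟨z, hz, ?_⟩
  have hzb : z - conj a ≠ 0 := sub_conj_ne ha hz.ge
  have h1 : z - a = v * (a - conj a) / (1 - v) := by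
    rw [hzdef]; field_simp; ring
  have h2 : z - conj a = (a - conj a) / (1 - v) := by
    rw [hzdef]; field_simp; ring
  have hEv : Complex.exp (α * I) * v = w := by
    rw [hvdef]; field_simp
  unfold halfToDisc
  rw [h1, h2, ← hEv]
  field_simp

lemma conj_angle_le (a x y : ℂ) (ha : 0 < a.im) (hx : 0 < x.im) (hy : 0 < y.im) :
    EuclideanGeometry.angle x (conj a) y ≤ visualAngleC upperHalfC x y := by
  set b : ℂ := conj a with hbdef
  have hbim : b.im < 0 := by simp [hbdef]; linarith
  have hdenom : (0:ℝ) < x.im - b.im := by linarith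
  set t : ℝ := (-b.im) / (x.im - b.im) with htdef
  have ht0 : 0 < t := div_pos (by linarith) hdenom
  have ht1 : t < 1 := (div_lt_one hdenom).mpr (by linarith)
  set w : ℂ := AffineMap.lineMap b x t with hwdef
  have hw_eq : w = b + (t : ℂ) * (x - b) := by
    rw [hwdef]
    simp [AffineMap.lineMap_apply, Complex.real_smul]
    ring
  have hw_im : w.im = 0 := by
    rw [hw_eq]
    simp only [Complex.add_im, Complex.mul_im, Complex.ofReal_re, Complex.ofReal_im,
      Complex.sub_im, Complex.sub_re]
    rw [htdef]
    field_simp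
    ring
  have hbx : b ≠ x := fun h => by rw [← h] at hx; linarith
  have hsbtw : Sbtw ℝ b w x := by
    rw [hwdef]
    exact sbtw_lineMap_iff.mpr ⟨hbx, ht0, ht1⟩
  have hby : b ≠ y := fun h => by rw [← h] at hy; linarith
  have hwy : w ≠ y := fun h => by rw [h] at hw_im; linarith
  have h3 : EuclideanGeometry.angle b w x = π := hsbtw.angle₁₂₃_eq_pi
  have h4 := EuclideanGeometry.angle_add_angle_eq_pi_of_angle_eq_pi y h3
  have h5 := EuclideanGeometry.angle_add_angle_add_angle_eq_pi (p₁ := y) (p₂ := b) (p₃ := w)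
    hby
  have h6 : EuclideanGeometry.angle y b w = EuclideanGeometry.angle y b x := by
    rw [euclid_angle_eq, euclid_angle_eq]
    have : w - b = t • (x - b) := by rw [hw_eq, Complex.real_smul]; ring
    rw [this]
    exact InnerProductGeometry.angle_smul_right_of_pos _ _ ht0
  have h7 : EuclideanGeometry.angle x b y ≤ EuclideanGeometry.angle y w x := by
    rw [EuclideanGeometry.angle_comm x b y, ← h6]
    have hcomm : EuclideanGeometry.angle b w y = EuclideanGeometry.angle y w b :=
      EuclideanGeometry.angle_comm _ _ _
    have hnn := EuclideanGeometry.angle_nonneg w y b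
    linarith
  calc EuclideanGeometry.angle x b y ≤ EuclideanGeometry.angle y w x := h7
    _ = EuclideanGeometry.angle x w y := EuclideanGeometry.angle_comm _ _ _
    _ ≤ visualAngleC upperHalfC x y := le_visual (by rw [frontier_upper]; exact hw_im)

lemma mem_frontier_disc_of_abs {w : ℂ} (h : ‖w‖ = 1) :
    w ∈ frontier (Metric.ball (0:ℂ) 1) := by
  rw [frontier_disc, mem_sphere_iff_norm, sub_zero]
  exact h

lemma abs_of_mem_frontier {w : ℂ} (h : w ∈ frontier (Metric.ball (0:ℂ) 1)) :
    ‖w‖ = 1 := by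
  rw [frontier_disc, mem_sphere_iff_norm, sub_zero] at h
  exact h

theorem part1 (a : ℂ) (ha : 0 < a.im) (α : ℝ) (x : ℂ) (hx : x ∈ upperHalfC) (y : ℂ)
    (hy : y ∈ upperHalfC) :
    visualAngleC upperHalfC x y / 2 ≤
        visualAngleC (Metric.ball 0 1) (halfToDisc a α x) (halfToDisc a α y) ∧
      visualAngleC (Metric.ball 0 1) (halfToDisc a α x) (halfToDisc a α y) ≤
        2 * visualAngleC upperHalfC x y := by
  have hx' : 0 < x.im := hx
  have hy' : 0 < y.im := hy
  set m := visualAngleC upperHalfC x y with hmdef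
  set vB := visualAngleC (Metric.ball 0 1) (halfToDisc a α x) (halfToDisc a α y) with hvBdef
  set φ := EuclideanGeometry.angle x (conj a) y with hφdef
  have hm0 : 0 ≤ m := le_trans (EuclideanGeometry.angle_nonneg x 0 y)
    (le_visual (by rw [frontier_upper]; exact Complex.zero_im))
  have hφm : φ ≤ m := conj_angle_le a x y ha hx' hy'
  have hxz : ∀ z : ℂ, z.im = 0 → x ≠ z := fun z hz h => by rw [h] at hx'; linarith [hx']
  have hyz : ∀ z : ℂ, z.im = 0 → y ≠ z := fun z hz h => by rw [h] at hy'; linarith [hy']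
  have hxb : x ≠ (conj a) := ne_conj_of_im ha hx'.le
  have hyb : y ≠ (conj a) := ne_conj_of_im ha hy'.le
  have hφo : φ = |(Complex.orientation.oangle (x - (conj a)) (y - (conj a))).toReal| :=
    angle_abs_oangle _ _ _ hxb hyb
  have hEmem : Complex.exp (α * Complex.I) ∈ frontier (Metric.ball (0:ℂ) 1) :=
    mem_frontier_disc_of_abs (Complex.norm_exp_ofReal_mul_I α)
  have hφvB : φ ≤ vB := by
    rw [hφdef, ← key_angle_E a ha α x y hx' hy']
    exact le_visual hEmem
  have hang : ∀ z : ℂ, z.im = 0 →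
      EuclideanGeometry.angle x z y = |(Complex.orientation.oangle (x - z) (y - z)).toReal| :=
    fun z hz => angle_abs_oangle _ _ _ (hxz z hz) (hyz z hz)
  -- upper bound
  have hub : vB ≤ m + φ := by
    apply visual_le ⟨_, hEmem⟩
    intro w hw
    rcases eq_or_ne w (Complex.exp (α * Complex.I)) with hwE | hwE
    · rw [hwE, key_angle_E a ha α x y hx' hy']
      linarith
    · obtain ⟨z, hz, hfz⟩ := htd_surj a ha α w (abs_of_mem_frontier hw) hwE
      rw [← hfz, key_angle a ha α x y z hx' hy' hz]
      have h1 := abs_toReal_add_le (Complex.orientation.oangle (x - z) (y - z))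
        (-(Complex.orientation.oangle (x - (conj a)) (y - (conj a))))
      rw [abs_toReal_neg] at h1
      rw [sub_eq_add_neg]
      calc |(Complex.orientation.oangle (x - z) (y - z)
            + -(Complex.orientation.oangle (x - (conj a)) (y - (conj a)))).toReal|
          ≤ |(Complex.orientation.oangle (x - z) (y - z)).toReal|
            + |(Complex.orientation.oangle (x - (conj a)) (y - (conj a))).toReal| := h1
        _ ≤ m + φ := by
            rw [← hφo, ← hang z hz]
            have := le_visual (G := upperHalfC) (x := x) (y := y) (z := z)
              (by rw [frontier_upper]; exact hz)
            linarith
  -- lower bound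
  have hlb : m ≤ vB + φ := by
    apply visual_le
    · exact ⟨(0:ℂ), by rw [frontier_upper]; exact Complex.zero_im⟩
    · intro z hz'
      have hz : z.im = 0 := by rwa [frontier_upper] at hz'
      rw [hang z hz]
      have hdecomp : Complex.orientation.oangle (x - z) (y - z)
          = (Complex.orientation.oangle (x - z) (y - z)
              - Complex.orientation.oangle (x - (conj a)) (y - (conj a)))
            + Complex.orientation.oangle (x - (conj a)) (y - (conj a)) := by abel
      rw [hdecomp]
      have h1 := abs_toReal_add_le (Complex.orientation.oangle (x - z) (y - z)
        - Complex.orientation.oangle (x - (conj a)) (y - (conj a)))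
        (Complex.orientation.oangle (x - (conj a)) (y - (conj a)))
      have h2 : |(Complex.orientation.oangle (x - z) (y - z)
          - Complex.orientation.oangle (x - (conj a)) (y - (conj a))).toReal| ≤ vB := by
        rw [← key_angle a ha α x y z hx' hy' hz]
        exact le_visual (mem_frontier_disc_of_abs (abs_htd_one a ha α z hz))
      rw [← hφo] at h1
      linarith
  constructor
  · linarith
  · linarith

lemma arccos_anti {c d : ℝ} (h : c ≤ d) : Real.arccos d ≤ Real.arccos c := by
  rw [Real.arccos_eq_pi_div_two_sub_arcsin, Real.arccos_eq_pi_div_two_sub_arcsin]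
  linarith [Real.monotone_arcsin h]

lemma angle_formula (U V : ℂ) :
    InnerProductGeometry.angle U V
      = Real.arccos ((U.re * V.re + U.im * V.im)
          / Real.sqrt ((U.re * U.re + U.im * U.im) * (V.re * V.re + V.im * V.im))) := by
  unfold InnerProductGeometry.angle
  rw [Complex.inner]
  congr 1
  have h1 : ((conj U) * V).re = U.re * V.re + U.im * V.im := by
    simp [Complex.mul_re]
  have h2 : ‖U‖ * ‖V‖
      = Real.sqrt ((U.re * U.re + U.im * U.im) * (V.re * V.re + V.im * V.im)) := by
    rw [Complex.norm_def, Complex.norm_def,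
      ← Real.sqrt_mul (Complex.normSq_nonneg _), Complex.normSq_apply, Complex.normSq_apply]
  rw [mul_comm V, h1, h2]

lemma le_div_sqrt {cst N P : ℝ} (hc : 0 ≤ cst) (hN : 0 ≤ N) (hP : 0 < P)
    (h : cst^2 * P ≤ N^2) : cst ≤ N / Real.sqrt P := by
  rw [le_div_iff₀ (Real.sqrt_pos.mpr hP)]
  have h1 : cst * Real.sqrt P = Real.sqrt (cst^2 * P) := by
    rw [Real.sqrt_mul (by positivity), Real.sqrt_sq hc]
  rw [h1]
  calc Real.sqrt (cst^2 * P) ≤ Real.sqrt (N^2) := Real.sqrt_le_sqrt h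
    _ = N := Real.sqrt_sq hN

lemma div_sqrt_eq {N P cst : ℝ} (hc : 0 ≤ cst) (hP : 0 < P) (h : P = (N / cst)^2)
    (hN : 0 < N) : N / Real.sqrt P = cst := by
  have hc' : 0 < cst := by
    rcases hc.lt_or_eq with h' | h'
    · exact h'
    · exfalso; rw [← h'] at h; simp at h; rw [h] at hP; simp at hP
  rw [h, Real.sqrt_sq (by positivity)]
  field_simp

lemma angle_le_arccos_of (U V : ℂ) (cst : ℝ) (hc : 0 ≤ cst)
    (hN : 0 ≤ U.re * V.re + U.im * V.im)
    (hP : 0 < (U.re * U.re + U.im * U.im) * (V.re * V.re + V.im * V.im))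
    (h : cst^2 * ((U.re * U.re + U.im * U.im) * (V.re * V.re + V.im * V.im))
      ≤ (U.re * V.re + U.im * V.im)^2) :
    InnerProductGeometry.angle U V ≤ Real.arccos cst := by
  rw [angle_formula]
  exact arccos_anti (le_div_sqrt hc hN hP h)

lemma vH_eq (p1 q1 p2 q2 cst t0 : ℝ) (hq1 : 0 < q1) (hq2 : 0 < q2) (hcst : 0 ≤ cst)
    (hAll : ∀ t : ℝ, 0 ≤ (p1-t)*(p2-t)+q1*q2 ∧
      cst^2 * (((p1-t)*(p1-t)+q1*q1)*((p2-t)*(p2-t)+q2*q2)) ≤ ((p1-t)*(p2-t)+q1*q2)^2)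
    (hWpos : 0 < (p1-t0)*(p2-t0)+q1*q2)
    (hWeq : ((p1-t0)*(p1-t0)+q1*q1)*((p2-t0)*(p2-t0)+q2*q2)
      = (((p1-t0)*(p2-t0)+q1*q2)/cst)^2) :
    visualAngleC upperHalfC ((p1:ℂ)+(q1:ℂ)*Complex.I) ((p2:ℂ)+(q2:ℂ)*Complex.I)
      = Real.arccos cst := by
  have hPpos : ∀ t : ℝ, 0 < ((p1-t)*(p1-t)+q1*q1)*((p2-t)*(p2-t)+q2*q2) := by
    intro t
    apply mul_pos <;> nlinarith [sq_nonneg (p1-t), sq_nonneg (p2-t)]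
  have hUre : ∀ z : ℂ, ((p1:ℂ)+(q1:ℂ)*Complex.I - z).re = p1 - z.re := by intro z; simp
  have hUim : ∀ z : ℂ, z.im = 0 → ((p1:ℂ)+(q1:ℂ)*Complex.I - z).im = q1 := by
    intro z hz; simp [hz]
  have hVre : ∀ z : ℂ, ((p2:ℂ)+(q2:ℂ)*Complex.I - z).re = p2 - z.re := by intro z; simp
  have hVim : ∀ z : ℂ, z.im = 0 → ((p2:ℂ)+(q2:ℂ)*Complex.I - z).im = q2 := by
    intro z hz; simp [hz]
  apply le_antisymm
  · apply visual_le ⟨0, by rw [frontier_upper]; exact Complex.zero_im⟩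
    intro z hz'
    have hz : z.im = 0 := by rwa [frontier_upper] at hz'
    rw [euclid_angle_eq]
    apply angle_le_arccos_of _ _ _ hcst
    · rw [hUre z, hUim z hz, hVre z, hVim z hz]
      exact (hAll z.re).1
    · rw [hUre z, hUim z hz, hVre z, hVim z hz]
      exact hPpos z.re
    · rw [hUre z, hUim z hz, hVre z, hVim z hz]
      exact (hAll z.re).2
  · have hmem : ((t0:ℝ):ℂ) ∈ frontier upperHalfC := by
      rw [frontier_upper]; exact Complex.ofReal_im t0
    refine le_trans (le_of_eq ?_) (le_visual hmem)
    rw [euclid_angle_eq, angle_formula]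
    rw [hUre _, hUim _ (Complex.ofReal_im t0), hVre _, hVim _ (Complex.ofReal_im t0),
      Complex.ofReal_re]
    exact congrArg Real.arccos (div_sqrt_eq hcst (hPpos t0) hWeq hWpos).symm

lemma vH_vert (c : ℝ) (hc : 0 < c) :
    visualAngleC upperHalfC ((c:ℂ)+((2*c:ℝ):ℂ)*Complex.I) ((c:ℂ)+((c/2:ℝ):ℂ)*Complex.I)
      = Real.arccos (4/5) := by
  apply vH_eq c (2*c) c (c/2) (4/5) (2*c) (by linarith) (by linarith) (by norm_num)
  · intro t
    constructor
    · nlinarith [sq_nonneg (c-t)]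
    · nlinarith [sq_nonneg ((c-t)*(c-t) - c*c), sq_nonneg (c*c)]
  · nlinarith
  · field_simp
    ring

lemma vH_horiz :
    visualAngleC upperHalfC (((-3/5:ℝ):ℂ)+((4/5:ℝ):ℂ)*Complex.I)
      (((3/5:ℝ):ℂ)+((4/5:ℝ):ℂ)*Complex.I) = Real.arccos (7/25) := by
  apply vH_eq (-3/5) (4/5) (3/5) (4/5) (7/25) 0 (by norm_num) (by norm_num) (by norm_num)
  · intro t
    constructor
    · nlinarith [sq_nonneg t]
    · nlinarith [sq_nonneg (t*t), sq_nonneg t, sq_nonneg (t*t*t)]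
  · norm_num
  · norm_num

lemma sphere_sum {w : ℂ} (h : w ∈ frontier (Metric.ball (0:ℂ) 1)) :
    w.re * w.re + w.im * w.im = 1 := by
  have h1 : ‖w‖ = 1 := abs_of_mem_frontier h
  have h2 : Complex.normSq w = 1 := by
    rw [← Complex.sq_norm, h1]; norm_num
  rwa [Complex.normSq_apply] at h2

lemma vB_pts : visualAngleC (Metric.ball 0 1) (Complex.I/3) (-Complex.I/3)
    = Real.arccos (4/5) := by
  have hUre : ∀ w : ℂ, (Complex.I/3 - w).re = -w.re := by intro w; simp
  have hUim : ∀ w : ℂ, (Complex.I/3 - w).im = 1/3 - w.im := by intro w; simp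
  have hVre : ∀ w : ℂ, (-Complex.I/3 - w).re = -w.re := by intro w; simp
  have hVim : ∀ w : ℂ, (-Complex.I/3 - w).im = -(1/3) - w.im := by intro w; simp; norm_num
  apply le_antisymm
  · apply visual_le ⟨1, mem_frontier_disc_of_abs (by simp)⟩
    intro w hw
    have h1 := sphere_sum hw
    have him2 : w.im * w.im ≤ 1 := by nlinarith [sq_nonneg w.re]
    rw [euclid_angle_eq]
    apply angle_le_arccos_of _ _ _ (by norm_num : (0:ℝ) ≤ 4/5)
    · rw [hUre w, hUim w, hVre w, hVim w]
      nlinarith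
    · rw [hUre w, hUim w, hVre w, hVim w]
      apply mul_pos <;> nlinarith [sq_nonneg w.re]
    · rw [hUre w, hUim w, hVre w, hVim w]
      nlinarith [sq_nonneg w.im]
  · have hmem : (1:ℂ) ∈ frontier (Metric.ball (0:ℂ) 1) := mem_frontier_disc_of_abs (by simp)
    refine le_trans (le_of_eq ?_) (le_visual hmem)
    rw [euclid_angle_eq, angle_formula]
    rw [hUre 1, hUim 1, hVre 1, hVim 1]
    simp only [Complex.one_re, Complex.one_im]
    apply congrArg Real.arccos
    have : ((-(1:ℝ)) * -1 + (1/3 - 0) * (-(1/3) - 0)) = 8/9 := by norm_num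
    rw [show ((-(1:ℝ)) * -1 + (1/3 - 0) * (-(1/3) - 0)) = 8/9 by norm_num,
      show ((-(1:ℝ)) * -1 + (1/3 - 0) * (1/3 - 0)) * ((-(1:ℝ)) * -1 + (-(1/3) - 0) * (-(1/3) - 0))
        = (10/9)^2 by norm_num,
      Real.sqrt_sq (by norm_num : (0:ℝ) ≤ 10/9)]
    norm_num

lemma double_arccos : 2 * Real.arccos (4/5) = Real.arccos (7/25) := by
  have h1 : Real.cos (Real.arccos (4/5)) = 4/5 := Real.cos_arccos (by norm_num) (by norm_num)
  have h2 : Real.cos (2 * Real.arccos (4/5)) = 7/25 := by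
    rw [Real.cos_two_mul, h1]; norm_num
  rw [← h2, Real.arccos_cos (by linarith [Real.arccos_nonneg (4/5:ℝ)])
    (by linarith [Real.arccos_le_pi_div_two.mpr (by norm_num : (0:ℝ) ≤ 4/5)])]

lemma cayley_m : cayley (((-3/5:ℝ):ℂ)+((4/5:ℝ):ℂ)*Complex.I) = Complex.I/3 := by
  unfold cayley
  rw [div_eq_iff]
  · apply Complex.ext <;> simp <;> norm_num
  · intro h
    have := congrArg Complex.im h
    simp at this
    norm_num at this

lemma cayley_p : cayley (((3/5:ℝ):ℂ)+((4/5:ℝ):ℂ)*Complex.I) = -Complex.I/3 := by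
  unfold cayley
  rw [div_eq_iff]
  · apply Complex.ext <;> simp <;> norm_num
  · intro h
    have := congrArg Complex.im h
    simp at this
    norm_num at this

theorem part3 : ∃ x ∈ upperHalfC, ∃ y ∈ upperHalfC, x ≠ y ∧
    visualAngleC (Metric.ball 0 1) (cayley x) (cayley y) =
      visualAngleC upperHalfC x y / 2 := by
  refine ⟨(((-3/5:ℝ):ℂ)+((4/5:ℝ):ℂ)*Complex.I), by simp [upperHalfC],
    (((3/5:ℝ):ℂ)+((4/5:ℝ):ℂ)*Complex.I), by simp [upperHalfC], ?_, ?_⟩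
  · intro h
    have := congrArg Complex.re h
    simp at this
    norm_num at this
  · rw [cayley_m, cayley_p, vB_pts, vH_horiz, ← double_arccos]
    ring

lemma angle_cmul (μ u v : ℂ) (hμ : μ ≠ 0) (hu : u ≠ 0) (hv : v ≠ 0) :
    InnerProductGeometry.angle (μ*u) (μ*v) = InnerProductGeometry.angle u v := by
  unfold InnerProductGeometry.angle
  rw [Complex.inner, Complex.inner]
  have h1 : (μ*v * conj (μ*u)) = ((Complex.normSq μ : ℝ) : ℂ) * (v * conj u) := by
    rw [map_mul]
    rw [← Complex.mul_conj]
    ring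
  rw [h1, Complex.re_ofReal_mul]
  have h2 : ‖μ*u‖ = ‖μ‖ * ‖u‖ := by
    rw [norm_mul]
  have h3 : ‖μ*v‖ = ‖μ‖ * ‖v‖ := by
    rw [norm_mul]
  rw [h2, h3]
  congr 1
  have habs : ‖μ‖ ≠ 0 := norm_ne_zero_iff.mpr hμ
  have hnu : ‖u‖ ≠ 0 := norm_ne_zero_iff.mpr hu
  have hnv : ‖v‖ ≠ 0 := norm_ne_zero_iff.mpr hv
  rw [Complex.normSq_eq_norm_sq]
  have h5 : ‖μ‖ * ‖u‖ * (‖μ‖ * ‖v‖) = (‖μ‖)^2 * (‖u‖*‖v‖) := by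
    ring
  rw [h5, mul_div_mul_left _ _ (pow_ne_zero 2 habs)]

lemma cayley_sub (A B : ℂ) (hA : A + Complex.I ≠ 0) (hB : B + Complex.I ≠ 0) :
    cayley A - cayley B = 2*Complex.I*(A-B)/((A+Complex.I)*(B+Complex.I)) := by
  unfold cayley
  field_simp
  ring

noncomputable def Fv (s : ℝ) : ℂ := (-1+2*Complex.I)/(1+(2+(s:ℂ))*Complex.I)
noncomputable def Gv (s : ℝ) : ℂ := (-2+Complex.I)/(2+(1+2*(s:ℂ))*Complex.I)

lemma Fv_den_ne (s : ℝ) : 1+(2+(s:ℂ))*Complex.I ≠ 0 := by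
  intro h
  have := congrArg Complex.re h
  simp at this

lemma Gv_den_ne (s : ℝ) : 2+(1+2*(s:ℂ))*Complex.I ≠ 0 := by
  intro h
  have := congrArg Complex.re h
  simp at this

lemma Fv_ne (s : ℝ) : Fv s ≠ 0 := by
  unfold Fv
  apply div_ne_zero _ (Fv_den_ne s)
  intro h
  have := congrArg Complex.im h
  simp at this

lemma Gv_ne (s : ℝ) : Gv s ≠ 0 := by
  unfold Gv
  apply div_ne_zero _ (Gv_den_ne s)
  intro h
  have := congrArg Complex.re h
  simp at this

lemma angle_witness (c : ℝ) (hc : 0 < c) :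
    EuclideanGeometry.angle (cayley ((c:ℂ)+((2*c:ℝ):ℂ)*Complex.I)) (cayley (((2*c:ℝ):ℂ)))
      (cayley ((c:ℂ)+((c/2:ℝ):ℂ)*Complex.I))
      = InnerProductGeometry.angle (Fv (1/c)) (Gv (1/c)) := by
  have hcc : (c:ℂ) ≠ 0 := Complex.ofReal_ne_zero.mpr hc.ne'
  have hXI : (c:ℂ)+((2*c:ℝ):ℂ)*Complex.I + Complex.I ≠ 0 := by
    intro h
    have := congrArg Complex.im h
    simp at this
    linarith
  have hUI : ((2*c:ℝ):ℂ) + Complex.I ≠ 0 := by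
    intro h
    have := congrArg Complex.im h
    simp at this
  have hYI : (c:ℂ)+((c/2:ℝ):ℂ)*Complex.I + Complex.I ≠ 0 := by
    intro h
    have := congrArg Complex.im h
    simp at this
    linarith
  set μ : ℂ := 2*Complex.I/(((2*c:ℝ):ℂ) + Complex.I) with hμdef
  have hμ : μ ≠ 0 := div_ne_zero (by simp) hUI
  have h1 : cayley ((c:ℂ)+((2*c:ℝ):ℂ)*Complex.I) - cayley (((2*c:ℝ):ℂ)) = μ * Fv (1/c) := by
    rw [cayley_sub _ _ hXI hUI, hμdef]
    unfold Fv
    push_cast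
    field_simp
    ring
  have h2 : cayley ((c:ℂ)+((c/2:ℝ):ℂ)*Complex.I) - cayley (((2*c:ℝ):ℂ)) = μ * Gv (1/c) := by
    rw [cayley_sub _ _ hYI hUI, hμdef]
    unfold Gv
    push_cast
    field_simp
    ring
  rw [euclid_angle_eq, h1, h2, angle_cmul _ _ _ hμ (Fv_ne _) (Gv_ne _)]

lemma Fv0 : Fv 0 = ((3/5:ℝ):ℂ) + ((4/5:ℝ):ℂ)*Complex.I := by
  unfold Fv
  rw [div_eq_iff (Fv_den_ne 0)]
  apply Complex.ext <;> simp <;> norm_num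

lemma Gv0 : Gv 0 = ((-3/5:ℝ):ℂ) + ((4/5:ℝ):ℂ)*Complex.I := by
  unfold Gv
  rw [div_eq_iff (Gv_den_ne 0)]
  apply Complex.ext <;> simp <;> norm_num

lemma angle_at0 : InnerProductGeometry.angle (Fv 0) (Gv 0) = Real.arccos (7/25) := by
  rw [Fv0, Gv0, angle_formula]
  apply congrArg Real.arccos
  simp only [Complex.add_re, Complex.add_im, Complex.ofReal_re, Complex.ofReal_im,
    Complex.mul_re, Complex.mul_im, Complex.I_re, Complex.I_im]
  rw [show ((3/5:ℝ) + (4/5*0 - 0*1)) * (-3/5 + (4/5*0 - 0*1))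
      + (0 + (4/5*1 + 0*0)) * (0 + (4/5*1 + 0*0)) = 7/25 by norm_num]
  rw [show (((3/5:ℝ) + (4/5*0 - 0*1)) * (3/5 + (4/5*0 - 0*1))
      + (0 + (4/5*1 + 0*0)) * (0 + (4/5*1 + 0*0)))
      * ((-3/5 + (4/5*0 - 0*1)) * (-3/5 + (4/5*0 - 0*1))
      + (0 + (4/5*1 + 0*0)) * (0 + (4/5*1 + 0*0))) = 1 by norm_num]
  rw [Real.sqrt_one]
  norm_num

lemma cont_angle : ContinuousAt (fun s : ℝ => InnerProductGeometry.angle (Fv s) (Gv s)) 0 := by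
  have hF : ContinuousAt Fv 0 := by
    unfold Fv
    exact continuousAt_const.div (by fun_prop) (Fv_den_ne 0)
  have hG : ContinuousAt Gv 0 := by
    unfold Gv
    exact continuousAt_const.div (by fun_prop) (Gv_den_ne 0)
  exact ContinuousAt.comp (f := fun s : ℝ => (Fv s, Gv s))
    (InnerProductGeometry.continuousAt_angle (x := (Fv 0, Gv 0)) (Fv_ne 0) (Gv_ne 0))
    (hF.prodMk hG)

lemma cayley_eq_htd (z : ℂ) : cayley z = halfToDisc Complex.I 0 z := by
  unfold cayley halfToDisc
  simp [Complex.conj_I, sub_neg_eq_add]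

theorem part2 (ε : ℝ) (hε : 0 < ε) : ∃ x ∈ upperHalfC, ∃ y ∈ upperHalfC,
    (2 - ε) * visualAngleC upperHalfC x y <
      visualAngleC (Metric.ball 0 1) (cayley x) (cayley y) := by
  have ha0 : 0 < Real.arccos (4/5) := Real.arccos_pos.mpr (by norm_num)
  have hKlt : (2 - ε) * Real.arccos (4/5) < Real.arccos (7/25) := by
    rw [← double_arccos]; nlinarith
  have htd : Filter.Tendsto (fun s : ℝ => InnerProductGeometry.angle (Fv s) (Gv s)) (nhds 0)
      (nhds (Real.arccos (7/25))) := by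
    rw [← angle_at0]
    exact cont_angle
  have hev : ∀ᶠ s : ℝ in nhds 0,
      (2 - ε) * Real.arccos (4/5) < InnerProductGeometry.angle (Fv s) (Gv s) :=
    htd.eventually (eventually_gt_nhds hKlt)
  obtain ⟨s, hsK, hs⟩ := ((hev.filter_mono (nhdsWithin_le_nhds (s := Set.Ioi (0:ℝ)))).and
    eventually_mem_nhdsWithin).exists
  have hs0 : 0 < s := hs
  have hc : 0 < 1/s := by positivity
  refine ⟨((1/s:ℝ):ℂ)+((2*(1/s):ℝ):ℂ)*Complex.I, by simp [upperHalfC]; positivity,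
    ((1/s:ℝ):ℂ)+(((1/s)/2:ℝ):ℂ)*Complex.I, by simp [upperHalfC]; positivity, ?_⟩
  rw [vH_vert (1/s) hc]
  have hwit : cayley (((2*(1/s):ℝ):ℂ)) ∈ frontier (Metric.ball (0:ℂ) 1) := by
    apply mem_frontier_disc_of_abs
    rw [cayley_eq_htd]
    exact abs_htd_one Complex.I (by simp) 0 _ (Complex.ofReal_im _)
  have h3 := angle_witness (1/s) hc
  rw [one_div_one_div] at h3
  calc (2 - ε) * Real.arccos (4/5) < InnerProductGeometry.angle (Fv s) (Gv s) := hsK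
    _ = _ := h3.symm
    _ ≤ _ := le_visual hwit

end VAM

theorem stmt3 :
    (∀ a : ℂ, 0 < a.im → ∀ α : ℝ, ∀ x ∈ upperHalfC, ∀ y ∈ upperHalfC,
      visualAngleC upperHalfC x y / 2 ≤
          visualAngleC (Metric.ball 0 1) (halfToDisc a α x) (halfToDisc a α y) ∧
        visualAngleC (Metric.ball 0 1) (halfToDisc a α x) (halfToDisc a α y) ≤
          2 * visualAngleC upperHalfC x y) ∧
    (∀ ε : ℝ, 0 < ε →
      ∃ x ∈ upperHalfC, ∃ y ∈ upperHalfC,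
        (2 - ε) * visualAngleC upperHalfC x y <
          visualAngleC (Metric.ball 0 1) (cayley x) (cayley y)) ∧
    (∃ x ∈ upperHalfC, ∃ y ∈ upperHalfC, x ≠ y ∧
      visualAngleC (Metric.ball 0 1) (cayley x) (cayley y) =
        visualAngleC upperHalfC x y / 2) := by
  exact ⟨fun a ha α x hx y hy => VAM.part1 a ha α x hx y hy, VAM.part2, VAM.part3⟩
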